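/- There exists a constant c > 0 such that for every positive integer n, the energy complexity of the n-bit OR function satisfies EC(OR_n) ≤ c·√n. -/

import Mathlib

/-- A gate in a Boolean circuit over the standard basis `{∨₂, ∧₂, ¬}`:
input gates labelled by variables, constant gates, and `∧`/`∨`/`¬` gates
whose arguments are (indices of) earlier gates. -/
inductive Gate (n : ℕ) : Type where
  | input : Fin n → Gate n
  | const : Bool → Gate n
  | and : ℕ → ℕ → Gate n
  | or : ℕ → ℕ → Gate n
  | not : ℕ → Gate n
deriving DecidableEq

/-- The indices of the incoming gates of a gate. -/
def Gate.deps {n : ℕ} : Gate n → List ℕ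
  | .and a b => [a, b]
  | .or a b => [a, b]
  | .not a => [a]
  | _ => []

/-- Inner gates are the non-input (and non-constant) gates, i.e. `∧`, `∨`, `¬` gates. -/
def Gate.isInner {n : ℕ} : Gate n → Bool
  | .and _ _ => true
  | .or _ _ => true
  | .not _ => true
  | _ => false

/-- A Boolean circuit over the standard basis on `n` input variables: a sequence of
gates (topologically sorted, so each gate only takes earlier gates as inputs,
which makes the underlying graph acyclic) together with a designated output gate. -/
structure Circuit (n : ℕ) : Type where
  size : ℕ
  gates : Fin size → Gate n
  out : Fin size
  wf : ∀ i : Fin size, ∀ j ∈ (gates i).deps, j < (i : ℕ)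

/-- The Boolean value of gate `i` of circuit `C` under input `x`. -/
def Circuit.evalGate {n : ℕ} (C : Circuit n) (x : Fin n → Bool) (i : ℕ) (h : i < C.size) :
    Bool :=
  match hg : C.gates ⟨i, h⟩ with
  | .input j => x j
  | .const b => b
  | .not a =>
      have ha : a < i := C.wf ⟨i, h⟩ a (by rw [hg]; simp [Gate.deps])
      ! C.evalGate x a (ha.trans h)
  | .and a b =>
      have ha : a < i := C.wf ⟨i, h⟩ a (by rw [hg]; simp [Gate.deps])
      have hb : b < i := C.wf ⟨i, h⟩ b (by rw [hg]; simp [Gate.deps])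
      C.evalGate x a (ha.trans h) && C.evalGate x b (hb.trans h)
  | .or a b =>
      have ha : a < i := C.wf ⟨i, h⟩ a (by rw [hg]; simp [Gate.deps])
      have hb : b < i := C.wf ⟨i, h⟩ b (by rw [hg]; simp [Gate.deps])
      C.evalGate x a (ha.trans h) || C.evalGate x b (hb.trans h)
termination_by i

/-- The output of circuit `C` on input `x`. -/
def Circuit.output {n : ℕ} (C : Circuit n) (x : Fin n → Bool) : Bool :=
  C.evalGate x C.out C.out.isLt

/-- `C` computes the Boolean function `f`. -/
def Circuit.Computes {n : ℕ} (C : Circuit n) (f : (Fin n → Bool) → Bool) : Prop :=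
  ∀ x, C.output x = f x

/-- The number of activated inner gates of `C` under input `x`. -/
def Circuit.energyAt {n : ℕ} (C : Circuit n) (x : Fin n → Bool) : ℕ :=
  (Finset.univ.filter fun i : Fin C.size =>
    (C.gates i).isInner = true ∧ C.evalGate x i i.isLt = true).card

/-- The energy complexity `EC(C)` of a circuit `C`: the maximum number of
activated inner gates over all inputs. -/
def Circuit.energy {n : ℕ} (C : Circuit n) : ℕ :=
  Finset.univ.sup fun x : Fin n → Bool => C.energyAt x

/-- The energy complexity `EC(f)` of a Boolean function `f`: the minimum of `EC(C)`
over all circuits `C` computing `f`. -/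
noncomputable def EC {n : ℕ} (f : (Fin n → Bool) → Bool) : ℕ :=
  sInf {k | ∃ C : Circuit n, C.Computes f ∧ C.energy = k}

/-- The `n`-bit OR function. -/
def ORf (n : ℕ) : (Fin n → Bool) → Bool := fun x => decide (∃ i, x i = true)
lemma Circuit.evalGate_const {n : ℕ} (C : Circuit n) (x : Fin n → Bool) (i : ℕ) (h : i < C.size)
    (b : Bool) (hg : C.gates ⟨i, h⟩ = .const b) : C.evalGate x i h = b := by
  rw [Circuit.evalGate]
  split <;> simp_all

lemma Circuit.evalGate_input {n : ℕ} (C : Circuit n) (x : Fin n → Bool) (i : ℕ) (h : i < C.size)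
    (j : Fin n) (hg : C.gates ⟨i, h⟩ = .input j) : C.evalGate x i h = x j := by
  rw [Circuit.evalGate]
  split <;> simp_all

lemma Circuit.evalGate_not {n : ℕ} (C : Circuit n) (x : Fin n → Bool) (i : ℕ) (h : i < C.size)
    (a : ℕ) (ha : a < C.size) (hg : C.gates ⟨i, h⟩ = .not a) :
    C.evalGate x i h = ! C.evalGate x a ha := by
  rw [Circuit.evalGate]
  split <;> simp_all

lemma Circuit.evalGate_and {n : ℕ} (C : Circuit n) (x : Fin n → Bool) (i : ℕ) (h : i < C.size)
    (a b : ℕ) (ha : a < C.size) (hb : b < C.size) (hg : C.gates ⟨i, h⟩ = .and a b) :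
    C.evalGate x i h = (C.evalGate x a ha && C.evalGate x b hb) := by
  rw [Circuit.evalGate]
  split <;> simp_all

lemma Circuit.evalGate_or {n : ℕ} (C : Circuit n) (x : Fin n → Bool) (i : ℕ) (h : i < C.size)
    (a b : ℕ) (ha : a < C.size) (hb : b < C.size) (hg : C.gates ⟨i, h⟩ = .or a b) :
    C.evalGate x i h = (C.evalGate x a ha || C.evalGate x b hb) := by
  rw [Circuit.evalGate]
  split <;> simp_all

namespace Stmt7

/-- block size / number of blocks -/
def mm (n : ℕ) : ℕ := n.sqrt + 1
/-- length of one block segment -/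
def DD (n : ℕ) : ℕ := 3 * mm n + 2

lemma mm_pos (n : ℕ) : 0 < mm n := Nat.succ_pos _
lemma DD_pos (n : ℕ) : 0 < DD n := by unfold DD; omega

lemma decomp_div (n k r : ℕ) (hr : r < DD n) : (k * DD n + r) / DD n = k := by
  rw [mul_comm, Nat.mul_add_div (DD_pos n), Nat.div_eq_of_lt hr, add_zero]

lemma decomp_mod (n k r : ℕ) (hr : r < DD n) : (k * DD n + r) % DD n = r := by
  rw [mul_comm, Nat.mul_add_mod, Nat.mod_eq_of_lt hr]

/-- the gate in block `k`, offset `r`. -/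
def gateF (n k r : ℕ) : Gate n :=
  if r = 0 then .not (k * DD n)
  else if r = 3 * mm n + 1 then .or (k * DD n) (k * DD n + r)
  else if (r - 1) % 3 = 0 then
    (if h : k * mm n + (r - 1) / 3 < n then .input ⟨k * mm n + (r - 1) / 3, h⟩
     else .const false)
  else if (r - 1) % 3 = 1 then .and (k * DD n + r) (k * DD n + 1)
  else .or (if (r - 1) / 3 = 0 then 0 else k * DD n + r - 2) (k * DD n + r)

def gateAt (n i : ℕ) : Gate n :=
  if i = 0 then .const false else gateF n ((i - 1) / DD n) ((i - 1) % DD n)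

lemma gateAt_at (n k r : ℕ) (hr : r < DD n) :
    gateAt n (k * DD n + r + 1) = gateF n k r := by
  unfold gateAt
  rw [if_neg (by omega), Nat.add_sub_cancel, decomp_div n k r hr, decomp_mod n k r hr]

lemma gateF_wf (n k r : ℕ) :
    ∀ j ∈ (gateF n k r).deps, j < k * DD n + r + 1 := by
  unfold gateF
  split_ifs
  all_goals intro j hj
  all_goals simp [Gate.deps] at hj
  all_goals omega

lemma exists_decomp (n i : ℕ) (hi : 0 < i) :
    ∃ k r, r < DD n ∧ i = k * DD n + r + 1 := by
  refine ⟨(i - 1) / DD n, (i - 1) % DD n, Nat.mod_lt _ (DD_pos n), ?_⟩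
  have := Nat.div_add_mod' (i - 1) (DD n)
  omega

lemma gateAt_wf (n i : ℕ) : ∀ j ∈ (gateAt n i).deps, j < i := by
  rcases Nat.eq_zero_or_pos i with hi | hi
  · subst hi; simp [gateAt, Gate.deps]
  · obtain ⟨k, r, hr, hik⟩ := exists_decomp n i hi
    subst hik
    rw [gateAt_at n k r hr]
    exact gateF_wf n k r

/-- the circuit -/
def Cir (n : ℕ) : Circuit n where
  size := 1 + mm n * DD n
  gates := fun i => gateAt n i.val
  out := ⟨mm n * DD n, by omega⟩
  wf := fun i => gateAt_wf n i.val

lemma Cir_size (n : ℕ) : (Cir n).size = 1 + mm n * DD n := rfl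
lemma Cir_gates (n : ℕ) (j : Fin (Cir n).size) : (Cir n).gates j = gateAt n j.val := rfl

end Stmt7
namespace Stmt7

/-- total version of the input -/
def X (n : ℕ) (x : Fin n → Bool) (t : ℕ) : Bool := if h : t < n then x ⟨t, h⟩ else false

/-- whether some input in blocks `0..k-1` is one -/
def pb (n : ℕ) (x : Fin n → Bool) (k : ℕ) : Bool :=
  decide (∃ t, t < k * mm n ∧ X n x t = true)

/-- whether some of the first `c` inputs of block `k` is one -/
def blk (n : ℕ) (x : Fin n → Bool) (k c : ℕ) : Bool :=
  decide (∃ t, t < c ∧ X n x (k * mm n + t) = true)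

/-- intended value of the gate in block `k`, offset `r` -/
def valF (n : ℕ) (x : Fin n → Bool) (k r : ℕ) : Bool :=
  if r = 0 then !pb n x k
  else if r = 3 * mm n + 1 then pb n x (k + 1)
  else if (r - 1) % 3 = 0 then X n x (k * mm n + (r - 1) / 3)
  else if (r - 1) % 3 = 1 then (X n x (k * mm n + (r - 1) / 3) && !pb n x k)
  else (blk n x k ((r - 1) / 3 + 1) && !pb n x k)

def val (n : ℕ) (x : Fin n → Bool) (i : ℕ) : Bool :=
  if i = 0 then false else valF n x ((i - 1) / DD n) ((i - 1) % DD n)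

lemma val_at (n : ℕ) (x : Fin n → Bool) (k r : ℕ) (hr : r < DD n) :
    val n x (k * DD n + r + 1) = valF n x k r := by
  unfold val
  rw [if_neg (by omega), Nat.add_sub_cancel, decomp_div n k r hr, decomp_mod n k r hr]

lemma pb_zero (n : ℕ) (x : Fin n → Bool) : pb n x 0 = false := by
  simp [pb]

lemma pb_succ (n : ℕ) (x : Fin n → Bool) (k : ℕ) :
    pb n x (k + 1) = (pb n x k || blk n x k (mm n)) := by
  have hexp : (k + 1) * mm n = k * mm n + mm n := by ring
  simp only [pb, blk, ← Bool.decide_or, decide_eq_decide]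
  constructor
  · rintro ⟨t, ht, hX⟩
    by_cases h : t < k * mm n
    · exact Or.inl ⟨t, h, hX⟩
    · refine Or.inr ⟨t - k * mm n, by omega, ?_⟩
      have : k * mm n + (t - k * mm n) = t := by omega
      rwa [this]
  · rintro (⟨t, ht, hX⟩ | ⟨t, ht, hX⟩)
    · exact ⟨t, by omega, hX⟩
    · exact ⟨k * mm n + t, by omega, hX⟩

lemma blk_zero (n : ℕ) (x : Fin n → Bool) (k : ℕ) : blk n x k 0 = false := by
  simp [blk]

lemma blk_succ (n : ℕ) (x : Fin n → Bool) (k c : ℕ) :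
    blk n x k (c + 1) = (blk n x k c || X n x (k * mm n + c)) := by
  rw [Bool.eq_iff_iff]
  simp only [blk, Bool.or_eq_true, decide_eq_true_eq]
  constructor
  · rintro ⟨t, ht, hX⟩
    rcases Nat.lt_succ_iff_lt_or_eq.mp ht with h | h
    · exact Or.inl ⟨t, h, hX⟩
    · subst h; exact Or.inr hX
  · rintro (⟨t, ht, hX⟩ | hX)
    · exact ⟨t, by omega, hX⟩
    · exact ⟨c, Nat.lt_succ_self c, hX⟩

lemma blk_mono (n : ℕ) (x : Fin n → Bool) (k : ℕ) {c c' : ℕ} (h : c ≤ c')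
    (hb : blk n x k c = true) : blk n x k c' = true := by
  simp only [blk, decide_eq_true_eq] at *
  obtain ⟨t, ht, hX⟩ := hb
  exact ⟨t, by omega, hX⟩

/-- the value of the `F`-gate of block `k-1` (index `k * DD n`; gate `0` for `k = 0`). -/
lemma val_F (n : ℕ) (x : Fin n → Bool) (k : ℕ) : val n x (k * DD n) = pb n x k := by
  cases k with
  | zero => simp [val, pb_zero]
  | succ k' =>
      have hexp : (k' + 1) * DD n = k' * DD n + (3 * mm n + 1) + 1 := by
        have h1 : (k' + 1) * DD n = k' * DD n + DD n := by ring
        have h2 : DD n = 3 * mm n + 2 := rfl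
        omega
      rw [hexp, val_at n x k' (3 * mm n + 1) (by unfold DD; omega)]
      unfold valF
      rw [if_neg (by omega), if_pos rfl]

end Stmt7
namespace Stmt7

lemma eval_eq_val (n : ℕ) (x : Fin n → Bool) :
    ∀ i (h : i < (Cir n).size), (Cir n).evalGate x i h = val n x i := by
  intro i
  induction i using Nat.strong_induction_on with
  | _ i IH =>
    intro h
    rcases Nat.eq_zero_or_pos i with hi0 | hipos
    · subst hi0
      rw [(Cir n).evalGate_const x 0 h false (by simp [Cir_gates, gateAt])]
      simp [val]
    · obtain ⟨k, r, hr, hik⟩ := exists_decomp n i hipos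
      subst hik
      have hD : DD n = 3 * mm n + 2 := rfl
      have hm : 0 < mm n := mm_pos n
      have hgate : (Cir n).gates ⟨k * DD n + r + 1, h⟩ = gateF n k r := by
        rw [Cir_gates, gateAt_at n k r hr]
      rw [val_at n x k r hr]
      by_cases h0 : r = 0
      · -- the mask gate ¬F_{k-1}
        subst h0
        have hlt : k * DD n < k * DD n + 0 + 1 := by omega
        rw [(Cir n).evalGate_not x _ h (k * DD n) (hlt.trans h)
            (by rw [hgate]; unfold gateF; simp)]
        rw [IH _ hlt _, val_F]
        unfold valF; simp
      by_cases hF : r = 3 * mm n + 1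
      · -- the gate F_k
        have ha : k * DD n < k * DD n + r + 1 := by omega
        have hb : k * DD n + r < k * DD n + r + 1 := by omega
        rw [(Cir n).evalGate_or x _ h (k * DD n) (k * DD n + r) (ha.trans h) (hb.trans h)
            (by rw [hgate]; unfold gateF; rw [if_neg (by omega), if_pos hF])]
        rw [IH _ ha _, IH _ hb _, val_F]
        have hr' : r - 1 < DD n := by omega
        have hrw : k * DD n + r = k * DD n + (r - 1) + 1 := by omega
        rw [hrw, val_at n x k (r - 1) hr']
        have hvb : valF n x k (r - 1) = (blk n x k (mm n) && !pb n x k) := by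
          unfold valF
          rw [if_neg (by omega), if_neg (by omega), if_neg (by omega), if_neg (by omega),
              show (r - 1 - 1) / 3 + 1 = mm n by omega]
        have hvt : valF n x k r = pb n x (k + 1) := by
          unfold valF; rw [if_neg h0, if_pos hF]
        rw [hvb, hvt, pb_succ]
        cases pb n x k <;> simp
      -- middle gates: 1 ≤ r ≤ 3 * mm n
      have hrle : 1 ≤ r ∧ r ≤ 3 * mm n := by omega
      set j := (r - 1) / 3 with hjdef
      have hjq : r - 1 = 3 * j + (r - 1) % 3 := by omega
      by_cases hq0 : (r - 1) % 3 = 0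
      · -- input gate (or constant)
        have hvf : valF n x k r = X n x (k * mm n + j) := by
          unfold valF
          rw [if_neg h0, if_neg hF, if_pos hq0]
        rw [hvf]
        by_cases hin : k * mm n + j < n
        · rw [(Cir n).evalGate_input x _ h ⟨k * mm n + j, hin⟩
              (by rw [hgate]; unfold gateF
                  rw [if_neg h0, if_neg hF, if_pos hq0, dif_pos hin])]
          unfold X
          rw [dif_pos hin]
        · rw [(Cir n).evalGate_const x _ h false
              (by rw [hgate]; unfold gateF
                  rw [if_neg h0, if_neg hF, if_pos hq0, dif_neg hin])]
          unfold X
          rw [dif_neg hin]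
      by_cases hq1 : (r - 1) % 3 = 1
      · -- the gate g = x ∧ mask
        have ha : k * DD n + r < k * DD n + r + 1 := by omega
        have hb : k * DD n + 1 < k * DD n + r + 1 := by omega
        rw [(Cir n).evalGate_and x _ h (k * DD n + r) (k * DD n + 1) (ha.trans h) (hb.trans h)
            (by rw [hgate]; unfold gateF
                rw [if_neg h0, if_neg hF, if_neg hq0, if_pos hq1])]
        rw [IH _ ha _, IH _ hb _]
        have hrw : k * DD n + r = k * DD n + (r - 1) + 1 := by omega
        have hrw1 : k * DD n + 1 = k * DD n + 0 + 1 := by omega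
        rw [hrw, val_at n x k (r - 1) (by omega), hrw1, val_at n x k 0 (by omega)]
        have hvf : valF n x k r = (X n x (k * mm n + j) && !pb n x k) := by
          unfold valF
          rw [if_neg h0, if_neg hF, if_neg hq0, if_pos hq1]
        have hvfa : valF n x k (r - 1) = X n x (k * mm n + j) := by
          unfold valF
          rw [if_neg (by omega), if_neg (by omega), if_pos (by omega),
              show (r - 1 - 1) / 3 = j by omega]
        have hvfb : valF n x k 0 = !pb n x k := by unfold valF; rw [if_pos rfl]
        rw [hvf, hvfa, hvfb]
      · -- the gate s = s' ∨ g
        have hq2 : (r - 1) % 3 = 2 := by omega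
        have hrj : r = 3 * j + 3 := by omega
        have ha : (if j = 0 then 0 else k * DD n + r - 2) < k * DD n + r + 1 := by
          split <;> omega
        have hb : k * DD n + r < k * DD n + r + 1 := by omega
        rw [(Cir n).evalGate_or x _ h _ (k * DD n + r) (ha.trans h) (hb.trans h)
            (by rw [hgate]; unfold gateF
                rw [if_neg h0, if_neg hF, if_neg hq0, if_neg hq1])]
        rw [IH _ ha _, IH _ hb _]
        have hvf : valF n x k r = (blk n x k (j + 1) && !pb n x k) := by
          unfold valF
          rw [if_neg h0, if_neg hF, if_neg hq0, if_neg hq1]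
        rw [hvf]
        have hrw : k * DD n + r = k * DD n + (r - 1) + 1 := by omega
        have hvfg : valF n x k (r - 1) = (X n x (k * mm n + j) && !pb n x k) := by
          unfold valF
          rw [if_neg (by omega), if_neg (by omega), if_neg (by omega), if_pos (by omega),
              show (r - 1 - 1) / 3 = j by omega]
        by_cases hj0 : j = 0
        · rw [if_pos hj0, hrw, val_at n x k (r - 1) (by omega), hvfg, blk_succ]
          rw [show val n x 0 = false by simp [val], hj0, blk_zero]
          cases pb n x k <;> simp
        · rw [if_neg hj0]
          have hrw2 : k * DD n + r - 2 = k * DD n + (r - 3) + 1 := by omega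
          rw [hrw2, hrw, val_at n x k (r - 1) (by omega), val_at n x k (r - 3) (by omega),
              hvfg, blk_succ]
          have hvfs : valF n x k (r - 3) = (blk n x k j && !pb n x k) := by
            unfold valF
            rw [if_neg (by omega), if_neg (by omega), if_neg (by omega), if_neg (by omega),
                show (r - 3 - 1) / 3 + 1 = j by omega]
          rw [hvfs]
          cases pb n x k <;> simp

end Stmt7
namespace Stmt7

lemma good_unique (n : ℕ) (x : Fin n → Bool) (k1 k2 : ℕ)
    (hb1 : blk n x k1 (mm n) = true) (hp1 : pb n x k1 = false)
    (hb2 : blk n x k2 (mm n) = true) (hp2 : pb n x k2 = false) : k1 = k2 := by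
  have key : ∀ a b : ℕ, blk n x a (mm n) = true → pb n x b = false → ¬ a < b := by
    intro a b hb hp hab
    simp only [blk, decide_eq_true_eq] at hb
    obtain ⟨t, ht, hX⟩ := hb
    have hno : ¬ ∃ s, s < b * mm n ∧ X n x s = true := by simpa [pb] using hp
    apply hno
    refine ⟨a * mm n + t, ?_, hX⟩
    have e1 : (a + 1) * mm n = a * mm n + mm n := by ring
    have e2 : (a + 1) * mm n ≤ b * mm n := Nat.mul_le_mul_right _ (by omega)
    omega
  rcases lt_trichotomy k1 k2 with h | h | h
  · exact absurd h (key k1 k2 hb1 hp2)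
  · exact h
  · exact absurd h (key k2 k1 hb2 hp1)

lemma mid_good (n : ℕ) (x : Fin n → Bool) (k r : ℕ) (hr1 : 1 ≤ r) (hr2 : r ≤ 3 * mm n)
    (hinner : (gateF n k r).isInner = true) (hval : valF n x k r = true) :
    blk n x k (mm n) = true ∧ pb n x k = false := by
  have h0 : ¬ r = 0 := by omega
  have hF : ¬ r = 3 * mm n + 1 := by omega
  by_cases hq0 : (r - 1) % 3 = 0
  · exfalso
    unfold gateF at hinner
    rw [if_neg h0, if_neg hF, if_pos hq0] at hinner
    split at hinner <;> simp [Gate.isInner] at hinner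
  · by_cases hq1 : (r - 1) % 3 = 1
    · unfold valF at hval
      rw [if_neg h0, if_neg hF, if_neg hq0, if_pos hq1] at hval
      rw [Bool.and_eq_true, Bool.not_eq_true'] at hval
      refine ⟨?_, hval.2⟩
      simp only [blk, decide_eq_true_eq]
      exact ⟨(r - 1) / 3, by omega, hval.1⟩
    · unfold valF at hval
      rw [if_neg h0, if_neg hF, if_neg hq0, if_neg hq1] at hval
      rw [Bool.and_eq_true, Bool.not_eq_true'] at hval
      exact ⟨blk_mono n x k (by omega) hval.1, hval.2⟩

lemma activated_struct (n : ℕ) (x : Fin n → Bool) (i : Fin (Cir n).size)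
    (hin : ((Cir n).gates i).isInner = true)
    (hev : (Cir n).evalGate x i.val i.isLt = true) :
    ∃ k r, r < DD n ∧ i.val = k * DD n + r + 1 ∧
      (gateF n k r).isInner = true ∧ valF n x k r = true := by
  rcases Nat.eq_zero_or_pos i.val with h0 | hpos
  · exfalso
    rw [Cir_gates, h0] at hin
    simp [gateAt, Gate.isInner] at hin
  · obtain ⟨k, r, hr, hik⟩ := exists_decomp n i.val hpos
    refine ⟨k, r, hr, hik, ?_, ?_⟩
    · rw [Cir_gates, hik, gateAt_at n k r hr] at hin; exact hin
    · rw [eval_eq_val n x i.val i.isLt, hik, val_at n x k r hr] at hev; exact hev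

lemma mod_of_decomp (n k r : ℕ) (hr : r < DD n) (i : ℕ) (hik : i = k * DD n + r + 1) :
    (i - 1) % DD n = r ∧ (i - 1) / DD n = k := by
  subst hik
  rw [Nat.add_sub_cancel]
  exact ⟨decomp_mod n k r hr, decomp_div n k r hr⟩

lemma energyAt_le (n : ℕ) (x : Fin n → Bool) : (Cir n).energyAt x ≤ 5 * mm n := by
  classical
  unfold Circuit.energyAt
  set S1 : Finset (Fin (Cir n).size) := Finset.univ.filter (fun i =>
      i.val ≠ 0 ∧ ((i.val - 1) % DD n = 0 ∨ (i.val - 1) % DD n = 3 * mm n + 1)) with hS1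
  set S2 : Finset (Fin (Cir n).size) := Finset.univ.filter (fun i =>
      ((Cir n).gates i).isInner = true ∧ (Cir n).evalGate x i.val i.isLt = true
        ∧ 1 ≤ (i.val - 1) % DD n ∧ (i.val - 1) % DD n ≤ 3 * mm n) with hS2
  have hsub : (Finset.univ.filter fun i : Fin (Cir n).size =>
      ((Cir n).gates i).isInner = true ∧ (Cir n).evalGate x i i.isLt = true) ⊆ S1 ∪ S2 := by
    intro i hi
    rw [Finset.mem_filter] at hi
    obtain ⟨-, hin, hev⟩ := hi
    obtain ⟨k, r, hr, hik, hinner, hval⟩ := activated_struct n x i hin hev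
    obtain ⟨hmod, hdiv⟩ := mod_of_decomp n k r hr i.val hik
    rw [Finset.mem_union, hS1, hS2, Finset.mem_filter, Finset.mem_filter]
    by_cases hc : r = 0 ∨ r = 3 * mm n + 1
    · exact Or.inl ⟨Finset.mem_univ i, by omega, by omega⟩
    · push_neg at hc
      have hD : DD n = 3 * mm n + 2 := rfl
      exact Or.inr ⟨Finset.mem_univ i, hin, hev, by omega, by omega⟩
  refine le_trans (le_trans (Finset.card_le_card hsub) (Finset.card_union_le S1 S2)) ?_
  have hb1 : S1.card ≤ (Finset.range (2 * mm n)).card := by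
    apply Finset.card_le_card_of_injOn
      (fun i => 2 * ((i.val - 1) / DD n) + (if (i.val - 1) % DD n = 0 then 0 else 1))
    · intro i hi
      rw [Finset.mem_coe, hS1, Finset.mem_filter] at hi
      obtain ⟨-, h0, hor⟩ := hi
      simp only [Finset.mem_coe, Finset.mem_range]
      have hsize : i.val < 1 + mm n * DD n := i.isLt
      have hdiv : (i.val - 1) / DD n < mm n := by
        rw [Nat.div_lt_iff_lt_mul (DD_pos n)]
        omega
      split <;> omega
    · intro i1 hm1 i2 hm2 heq
      simp only [Finset.mem_coe, hS1, Finset.mem_filter] at hm1 hm2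
      obtain ⟨-, h01, hor1⟩ := hm1
      obtain ⟨-, h02, hor2⟩ := hm2
      have heq' : 2 * ((i1.val - 1) / DD n) + (if (i1.val - 1) % DD n = 0 then 0 else 1)
          = 2 * ((i2.val - 1) / DD n) + (if (i2.val - 1) % DD n = 0 then 0 else 1) := heq
      have e1 : DD n * ((i1.val - 1) / DD n) + (i1.val - 1) % DD n = i1.val - 1 :=
        Nat.div_add_mod _ _
      have e2 : DD n * ((i2.val - 1) / DD n) + (i2.val - 1) % DD n = i2.val - 1 :=
        Nat.div_add_mod _ _
      have hd : (i1.val - 1) / DD n = (i2.val - 1) / DD n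
          ∧ (i1.val - 1) % DD n = (i2.val - 1) % DD n := by
        clear e1 e2
        rcases hor1 with ha | ha <;> rcases hor2 with hb | hb <;>
          rw [ha, hb] at heq' <;> rw [ha, hb] <;>
          split at heq' <;> (try split at heq') <;> omega
      have hd' : DD n * ((i1.val - 1) / DD n) = DD n * ((i2.val - 1) / DD n) := by rw [hd.1]
      have hd2 := hd.2
      exact Fin.ext (by omega)
  have hb2 : S2.card ≤ (Finset.range (3 * mm n)).card := by
    apply Finset.card_le_card_of_injOn (fun i => (i.val - 1) % DD n - 1)
    · intro i hi
      rw [Finset.mem_coe, hS2, Finset.mem_filter] at hi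
      simp only [Finset.mem_coe, Finset.mem_range]
      omega
    · intro i1 hm1 i2 hm2 heq
      simp only [Finset.mem_coe, hS2, Finset.mem_filter] at hm1 hm2
      obtain ⟨-, hin1, hev1, hr11, hr12⟩ := hm1
      obtain ⟨-, hin2, hev2, hr21, hr22⟩ := hm2
      obtain ⟨k1, r1, hr1, hik1, hinner1, hval1⟩ := activated_struct n x i1 hin1 hev1
      obtain ⟨k2, r2, hr2, hik2, hinner2, hval2⟩ := activated_struct n x i2 hin2 hev2
      obtain ⟨hmod1, -⟩ := mod_of_decomp n k1 r1 hr1 i1.val hik1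
      obtain ⟨hmod2, -⟩ := mod_of_decomp n k2 r2 hr2 i2.val hik2
      have hg1 := mid_good n x k1 r1 (by omega) (by omega) hinner1 hval1
      have hg2 := mid_good n x k2 r2 (by omega) (by omega) hinner2 hval2
      have hk : k1 = k2 := good_unique n x k1 k2 hg1.1 hg1.2 hg2.1 hg2.2
      have heq' : (i1.val - 1) % DD n - 1 = (i2.val - 1) % DD n - 1 := heq
      have hreq : r1 = r2 := by omega
      apply Fin.ext
      rw [hik1, hik2, hk, hreq]
  rw [Finset.card_range] at hb1 hb2
  omega

lemma energy_le (n : ℕ) : (Cir n).energy ≤ 5 * mm n :=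
  Finset.sup_le fun x _ => energyAt_le n x

lemma Cir_computes (n : ℕ) : (Cir n).Computes (ORf n) := by
  intro x
  unfold Circuit.output
  rw [eval_eq_val]
  show val n x (mm n * DD n) = ORf n x
  rw [val_F]
  unfold pb ORf
  rw [decide_eq_decide]
  have hn : n < mm n * mm n := Nat.lt_succ_sqrt n
  constructor
  · rintro ⟨t, ht, hX⟩
    unfold X at hX
    by_cases h : t < n
    · rw [dif_pos h] at hX; exact ⟨⟨t, h⟩, hX⟩
    · rw [dif_neg h] at hX; exact absurd hX (by simp)
  · rintro ⟨i, hi⟩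
    refine ⟨i.val, lt_trans i.isLt hn, ?_⟩
    unfold X
    rw [dif_pos i.isLt]
    exact hi

lemma EC_le (n : ℕ) : EC (ORf n) ≤ 5 * mm n := by
  have hmem : (Cir n).energy ∈ {k | ∃ C : Circuit n, C.Computes (ORf n) ∧ C.energy = k} :=
    ⟨Cir n, Cir_computes n, rfl⟩
  exact le_trans (Nat.sInf_le hmem) (energy_le n)

end Stmt7

/-- There is a constant `c > 0` such that for every positive `n`,
`EC(OR_n) ≤ c·√n`. -/
theorem stmt7 : ∃ c : ℝ, 0 < c ∧ ∀ n : ℕ, 0 < n →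
    (EC (ORf n) : ℝ) ≤ c * Real.sqrt n := by
  refine ⟨10, by norm_num, ?_⟩
  intro n hn
  have h1 : (EC (ORf n) : ℝ) ≤ 5 * ((Nat.sqrt n : ℝ) + 1) := by
    have h := Stmt7.EC_le n
    unfold Stmt7.mm at h
    have : (EC (ORf n) : ℝ) ≤ ((5 * (Nat.sqrt n + 1) : ℕ) : ℝ) := by exact_mod_cast h
    push_cast at this
    linarith
  have hsq : ((Nat.sqrt n : ℝ)) ^ 2 ≤ (n : ℝ) := by
    exact_mod_cast Nat.sqrt_le' n
  have hs : (Nat.sqrt n : ℝ) ≤ Real.sqrt n := by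
    calc (Nat.sqrt n : ℝ) = Real.sqrt ((Nat.sqrt n : ℝ) ^ 2) := by
          rw [Real.sqrt_sq (by positivity)]
      _ ≤ Real.sqrt n := Real.sqrt_le_sqrt hsq
  have hone : 1 ≤ Real.sqrt n := by
    rw [show (1 : ℝ) = Real.sqrt 1 by simp]
    exact Real.sqrt_le_sqrt (by exact_mod_cast hn)
  calc (EC (ORf n) : ℝ) ≤ 5 * ((Nat.sqrt n : ℝ) + 1) := h1
    _ ≤ 5 * (Real.sqrt n + Real.sqrt n) := by linarith
    _ = 10 * Real.sqrt n := by ring
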